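/- Let X be a metric space, let ε > 0 and let y : ℕ → X satisfy d(y i, y j) > ε for all i ≠ j, and let U be a free (nonprincipal) ultrafilter on ℕ. Suppose (μ_n)_{n∈ℕ} are Borel probability measures on X with μ_n(range y) = 1 for all n, and such that for every bounded uniformly continuous f : X → ℝ and every L ∈ ℝ, if f ∘ y tends to L along U then ∫ f dμ_n → L as n → ∞. Then for every S ⊆ ℕ, the sequence μ_n(y '' S) converges to 1 if S ∈ U and converges to 0 if S ∉ U. -/

import Mathlib

open MeasureTheory Filter Topology

/-- if `y : ℕ → X` is a uniformly `ε`-separated sequence, `U` is a free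
ultrafilter on `ℕ`, and the Borel probability measures `μ n` concentrate on the range of `y`
and converge weakly (against bounded uniformly continuous functions) to the charge determined
by `U` and `y`, then `μ n (y '' S) → 1` for `S ∈ U` and `μ n (y '' S) → 0` for `S ∉ U`. -/
theorem tendsto_measure_image_of_weak_limit_ultrafilter_charge_separated
    {X : Type*} [MetricSpace X] [MeasurableSpace X] [BorelSpace X]
    (ε : ℝ) (hε : 0 < ε) (y : ℕ → X)
    (hy : ∀ i j : ℕ, i ≠ j → ε < dist (y i) (y j))
    (U : Ultrafilter ℕ) (hU : (U : Filter ℕ) ≤ Filter.cofinite)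
    (μ : ℕ → Measure X) (hprob : ∀ n, IsProbabilityMeasure (μ n))
    (hrange : ∀ n, μ n (Set.range y) = 1)
    (hconv : ∀ f : X → ℝ, UniformContinuous f → (∃ C : ℝ, ∀ x, |f x| ≤ C) →
      ∀ L : ℝ, Tendsto (f ∘ y) (U : Filter ℕ) (𝓝 L) →
        Tendsto (fun n => ∫ x, f x ∂(μ n)) atTop (𝓝 L)) :
    ∀ S : Set ℕ,
      (S ∈ U → Tendsto (fun n => μ n (y '' S)) atTop (𝓝 1)) ∧
      (S ∉ U → Tendsto (fun n => μ n (y '' S)) atTop (𝓝 0)) := by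
  classical
  -- the image of any set under `y` is closed
  have hclosed : ∀ T : Set ℕ, IsClosed (y '' T) := by
    intro T
    refine IsSeqClosed.isClosed ?_
    intro u x hu hux
    obtain ⟨N, hN⟩ := Metric.cauchySeq_iff'.1 hux.cauchySeq ε hε
    have hconst : ∀ n ≥ N, u n = u N := by
      intro n hn
      obtain ⟨i, _, hiy⟩ := hu n
      obtain ⟨j, _, hjy⟩ := hu N
      by_contra hne
      have hij : i ≠ j := fun h => hne (by rw [← hiy, ← hjy, h])
      have := hy i j hij
      rw [hiy, hjy] at this
      exact absurd (hN n hn) (not_lt.2 this.le)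
    have htc : Tendsto u atTop (𝓝 (u N)) :=
      tendsto_const_nhds.congr' ((eventually_atTop.2 ⟨N, hconst⟩).mono fun n h => h.symm)
    exact tendsto_nhds_unique hux htc ▸ hu N
  intro S
  -- key step, for nonempty `S`
  have key : S.Nonempty → ∀ L : ℝ, 0 ≤ L →
      Tendsto (fun i => if i ∈ S then (1:ℝ) else 0) (U : Filter ℕ) (𝓝 L) →
      Tendsto (fun n => μ n (y '' S)) atTop (𝓝 (ENNReal.ofReal L)) := by
    intro hne L hL0 hind
    set A : Set X := y '' S with hA
    have hAc : IsClosed A := hclosed S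
    have hAne : A.Nonempty := hne.image y
    set g : X → ℝ := fun x => 1 - ε⁻¹ * Metric.infDist x A with hg
    set f : X → ℝ := fun x => max (g x) 0 with hf
    -- uniform continuity
    have hguc : UniformContinuous g := by
      have h1 := (Metric.lipschitz_infDist_pt A).uniformContinuous
      have h2 : UniformContinuous fun x => ε⁻¹ * Metric.infDist x A := by
        simpa [Pi.smul_def, smul_eq_mul] using h1.const_smul ε⁻¹
      exact uniformContinuous_const.sub h2
    have hfuc : UniformContinuous f := by
      have : f = (fun t : ℝ => max t 0) ∘ g := rfl
      rw [this]
      exact (lipschitzWith_posPart.uniformContinuous).comp hguc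
    -- boundedness
    have hbd : ∀ x, |f x| ≤ 1 := by
      intro x
      rw [abs_le]
      constructor
      · linarith [le_max_right (g x) 0]
      · have : g x ≤ 1 := by
          have h1 : 0 ≤ Metric.infDist x A := Metric.infDist_nonneg
          have h2 : 0 ≤ ε⁻¹ := le_of_lt (inv_pos.2 hε)
          have := mul_nonneg h2 h1
          simp only [hg]; linarith
        exact max_le this zero_le_one
    -- values of `f` on the range of `y`
    have hfy : ∀ i : ℕ, f (y i) = if i ∈ S then 1 else 0 := by
      intro i
      by_cases hi : i ∈ S
      · have : Metric.infDist (y i) A = 0 :=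
          Metric.infDist_zero_of_mem ⟨i, hi, rfl⟩
        simp [hf, hg, this, hi]
      · have hge : ε ≤ Metric.infDist (y i) A := by
          by_contra hlt
          push_neg at hlt
          obtain ⟨z, ⟨j, hjS, rfl⟩, hdz⟩ := (Metric.infDist_lt_iff hAne).1 hlt
          have hij : i ≠ j := fun h => hi (h ▸ hjS)
          exact absurd hdz (not_lt.2 (hy i j hij).le)
        have hgle : g (y i) ≤ 0 := by
          have : 1 ≤ ε⁻¹ * Metric.infDist (y i) A := by
            rw [← inv_mul_cancel₀ (ne_of_gt hε)]
            exact mul_le_mul_of_nonneg_left hge (le_of_lt (inv_pos.2 hε))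
          simp only [hg]; linarith
        simp [hf, hi, max_eq_right hgle]
    -- integral of `f` equals the measure of `A`
    have hint : ∀ n, ∫ x, f x ∂(μ n) = (μ n A).toReal := by
      intro n
      have hm : MeasurableSet (Set.range y) := by
        have := (hclosed Set.univ).measurableSet
        rwa [Set.image_univ] at this
      have hnull : μ n (Set.range y)ᶜ = 0 := by
        have := hprob n
        rw [measure_compl hm (measure_ne_top _ _), hrange n, measure_univ, tsub_self]
      have hae : f =ᵐ[μ n] A.indicator (fun _ => (1:ℝ)) := by
        refine measure_mono_null ?_ hnull
        intro x hx
        simp only [Set.mem_compl_iff, Set.mem_setOf_eq] at hx ⊢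
        intro hxr
        obtain ⟨i, rfl⟩ := hxr
        apply hx
        by_cases hi : i ∈ S
        · rw [hfy i, if_pos hi, Set.indicator_of_mem (show y i ∈ A from ⟨i, hi, rfl⟩)]
        · have hniA : y i ∉ A := by
            rintro ⟨j, hjS, hji⟩
            have hij : i ≠ j := fun h => hi (h ▸ hjS)
            have := hy i j hij
            rw [hji, dist_self] at this
            exact absurd this (not_lt.2 (le_of_lt hε))
          rw [hfy i, if_neg hi, Set.indicator_of_notMem hniA]
      rw [integral_congr_ae hae, integral_indicator hAc.measurableSet]
      simp
      rfl
    -- apply the weak convergence hypothesis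
    have hcv : Tendsto (fun n => (μ n A).toReal) atTop (𝓝 L) := by
      have := hconv f hfuc ⟨1, hbd⟩ L (by
        have : f ∘ y = fun i => if i ∈ S then (1:ℝ) else 0 := funext hfy
        rw [this]; exact hind)
      simpa only [hint] using this
    refine (ENNReal.tendsto_toReal_iff (fun n => measure_ne_top (μ n) A)
      (x := ENNReal.ofReal L) ENNReal.ofReal_ne_top).1 ?_
    rwa [ENNReal.toReal_ofReal hL0]
  constructor
  · intro hS
    have hne : S.Nonempty := Ultrafilter.nonempty_of_mem hS
    have hind : Tendsto (fun i => if i ∈ S then (1:ℝ) else 0) (U : Filter ℕ) (𝓝 1) := by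
      refine tendsto_const_nhds.congr' ?_
      filter_upwards [hS] with i hi
      simp [hi]
    simpa using key hne 1 zero_le_one hind
  · intro hS
    rcases Set.eq_empty_or_nonempty S with rfl | hne
    · simpa using (tendsto_const_nhds : Tendsto (fun _ : ℕ => (0:ENNReal)) atTop (𝓝 0))
    · have hSc : Sᶜ ∈ U := (Ultrafilter.compl_mem_iff_notMem).2 hS
      have hind : Tendsto (fun i => if i ∈ S then (1:ℝ) else 0) (U : Filter ℕ) (𝓝 0) := by
        refine tendsto_const_nhds.congr' ?_
        filter_upwards [hSc] with i hi
        rw [if_neg hi]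
      simpa using key hne 0 le_rfl hind
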